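/- Let K be a compact metric space, V a topological space with a metric d, and f : K → V continuous and injective. Assume: (a) there exist r > 0 such that for every x ∈ K, the ball B(f(x), r) in V is contained in some open set in which every loop is null-homotopic in V; (b) for every δ > 0 there exists η > 0 such that any two points x, y ∈ K with d(x, y) < η are joined by a continuous path in K whose image has diameter less than δ. Then there exists ε > 0 such that for every continuous map g : K → V that is ε-close to f, every double point of g has a double point loop which is null-homotopic in V. (Precisely: if g(x) = g(y) with x ≠ y, there is a path α from x to y in K such that the loop g ∘ α is null-homotopic in V.) -/
import Mathlib

private lemma cast_homotopic_helper {X : Type*} [TopologicalSpace X] {a b : X} (h : a = b)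
    (γ : Path a b) (H : (γ.cast rfl h).Homotopic (Path.refl a)) :
    γ.Homotopic ((Path.refl a).cast rfl h.symm) := by
  subst h
  have h1 : γ.cast rfl rfl = γ := by ext t; rfl
  have h2 : (Path.refl a).cast rfl rfl = Path.refl a := by ext t; rfl
  rw [h1] at H; rw [h2]; exact H

/-- Uniform injectivity modulus for a continuous injective map on a compact metric space. -/
private lemma inj_modulus {K V : Type*} [MetricSpace K] [CompactSpace K] [MetricSpace V]
    (f : K → V) (hf : Continuous f) (hinj : Function.Injective f) {δ : ℝ} (hδ : 0 < δ) :
    ∃ ρ > 0, ∀ x y : K, dist (f x) (f y) < ρ → dist x y < δ := by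
  set C : Set (K × K) := {p | δ ≤ dist p.1 p.2} with hC
  have hCclosed : IsClosed C := by
    exact isClosed_le continuous_const (continuous_fst.dist continuous_snd)
  have hCcomp : IsCompact C := hCclosed.isCompact
  rcases C.eq_empty_or_nonempty with hE | hNE
  · refine ⟨1, one_pos, fun x y _ => ?_⟩
    by_contra hcon
    have : (x, y) ∈ C := not_lt.mp hcon
    simp [hE] at this
  · have hcont : ContinuousOn (fun p : K × K => dist (f p.1) (f p.2)) C :=
      ((hf.comp continuous_fst).dist (hf.comp continuous_snd)).continuousOn
    obtain ⟨p, hpC, hpmin⟩ := hCcomp.exists_isMinOn hNE hcont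
    have hppos : 0 < dist (f p.1) (f p.2) := by
      rw [dist_pos]
      intro h
      have := hinj h
      have : dist p.1 p.2 = 0 := by simp [this]
      have := hpC
      simp only [hC, Set.mem_setOf_eq] at this
      linarith
    refine ⟨dist (f p.1) (f p.2), hppos, fun x y hxy => ?_⟩
    by_contra hcon
    have hmem : (x, y) ∈ C := not_lt.mp hcon
    have : dist (f p.1) (f p.2) ≤ dist (f x) (f y) := hpmin hmem
    linarith

theorem pi1_null_approx
    {K V : Type*} [MetricSpace K] [CompactSpace K] [MetricSpace V]
    (f : K → V) (hf : Continuous f) (hinj : Function.Injective f)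
    -- (a): a uniform radius r such that each ball B(f x, r) lies in an open set
    -- all of whose loops are null-homotopic in V
    (ha : ∃ r > 0, ∀ x : K, ∃ U : Set V, IsOpen U ∧ Metric.ball (f x) r ⊆ U ∧
      ∀ (p : V) (γ : Path p p), Set.range γ ⊆ U → γ.Homotopic (Path.refl p))
    -- (b): uniformly small paths between nearby points
    (hb : ∀ δ > 0, ∃ η > 0, ∀ x y : K, dist x y < η →
      ∃ α : Path x y, Metric.diam (Set.range α) < δ) :
    ∃ ε > 0, ∀ g : C(K, V), (∀ z, dist (g z) (f z) < ε) →
      ∀ x y : K, x ≠ y → (h : g x = g y) →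
        ∃ α : Path x y,
          (α.map g.continuous).Homotopic ((Path.refl (g x)).cast rfl h.symm) := by
  obtain ⟨r, hr, hU⟩ := ha
  -- uniform continuity of f
  have hfu := Metric.uniformContinuous_iff.mp (CompactSpace.uniformContinuous_of_continuous hf)
  obtain ⟨δ₀, hδ₀, hδ₀f⟩ := hfu (r / 4) (by linarith)
  -- small paths for δ₀
  obtain ⟨η, hη, hηpath⟩ := hb δ₀ hδ₀
  -- injectivity modulus for η
  obtain ⟨ρ, hρ, hρinj⟩ := inj_modulus f hf hinj hη
  refine ⟨min (r / 4) (ρ / 2), lt_min (by linarith) (by linarith), fun g hg x y hxy h => ?_⟩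
  have hε1 : min (r / 4) (ρ / 2) ≤ r / 4 := min_le_left _ _
  have hε2 : min (r / 4) (ρ / 2) ≤ ρ / 2 := min_le_right _ _
  -- f x and f y are close
  have hfxy : dist (f x) (f y) < ρ := by
    have h1 := hg x
    have h2 := hg y
    calc dist (f x) (f y) ≤ dist (f x) (g x) + dist (g x) (f y) := dist_triangle _ _ _
      _ = dist (g x) (f x) + dist (g y) (f y) := by rw [dist_comm (f x), h]
      _ < min (r / 4) (ρ / 2) + min (r / 4) (ρ / 2) := by linarith
      _ ≤ ρ := by linarith
  have hxyclose : dist x y < η := hρinj x y hfxy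
  obtain ⟨α, hα⟩ := hηpath x y hxyclose
  refine ⟨α, ?_⟩
  apply cast_homotopic_helper h
  -- the loop (g ∘ α) stays in the ball B(f x, r)
  obtain ⟨U, hUopen, hUball, hUnull⟩ := hU x
  apply hUnull
  rw [Path.cast_coe, Path.map_coe]
  rintro v ⟨t, rfl⟩
  apply hUball
  simp only [Metric.mem_ball, Function.comp_apply]
  have hdt : dist (α t) x < δ₀ := by
    have hx : x ∈ Set.range α := ⟨0, α.source⟩
    have ht : (α t : K) ∈ Set.range α := ⟨t, rfl⟩
    have := Metric.dist_le_diam_of_mem (Metric.isBounded_of_compactSpace.subset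
      (Set.subset_univ _)) ht hx
    calc dist (α t) x ≤ Metric.diam (Set.range α) :=
          Metric.dist_le_diam_of_mem ((isCompact_range α.continuous).isBounded) ht hx
      _ < δ₀ := hα
  have h1 : dist (f (α t)) (f x) < r / 4 := hδ₀f hdt
  have h2 : dist (g (α t)) (f (α t)) < min (r / 4) (ρ / 2) := hg _
  calc dist (g (α t)) (f x) ≤ dist (g (α t)) (f (α t)) + dist (f (α t)) (f x) :=
        dist_triangle _ _ _
    _ < r / 4 + r / 4 := by
        have := lt_of_lt_of_le h2 hε1
        linarith
    _ < r := by linarith
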